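/- (Theorem 3.4(b), Euclidean case.) Let p̄ ∈ F, let each ψ_u (u = 1,…,t) be directionally differentiable at p̄, and assume ψ_u is strictly pseudo-convex at p̄ for every active index u ∈ J(p̄). Let the interval-valued objectives φ_s (s = 1,…,l), defined on the nonempty open convex set E, be weakly directionally differentiable at p̄ and CW-strictly pseudo-convex at p̄. Suppose that for every feasible point p ∈ F there exist scalars λ_s^C > 0, λ_s^W > 0 (s = 1,…,l) and μ_u^C ≥ 0, μ_u^W ≥ 0 (u = 1,…,t), possibly depending on p, such that: (iv) Σ_{s=1}^l λ_s^C (φ_s^C)'(p̄; p − p̄) + Σ_{u=1}^t μ_u^C ψ_u'(p̄; p − p̄) ≥ 0; (v) Σ_{s=1}^l λ_s^W (φ_s^W)'(p̄; p − p̄) + Σ_{u=1}^t μ_u^W ψ_u'(p̄; p − p̄) ≥ 0; and (vi) μ_u^C ψ_u(p̄) = 0 = μ_u^W ψ_u(p̄) for all u. Then p̄ is a type-II Pareto optimal solution of (MIVOP2). -/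
import Mathlib


/-- One-sided directional derivative of `f` at `p` in direction `w`, with value `d`. -/
def HasDirDeriv {V : Type*} [NormedAddCommGroup V] [NormedSpace ℝ V]
    (f : V → ℝ) (p w : V) (d : ℝ) : Prop :=
  Filter.Tendsto (fun α : ℝ => (f (p + α • w) - f p) / α)
    (nhdsWithin 0 (Set.Ioi 0)) (nhds d)

/-- `f` is convex at the point `p` (relative to the convex set `E`). -/
def ConvexAtPt {V : Type*} [NormedAddCommGroup V] [NormedSpace ℝ V]
    (E : Set V) (f : V → ℝ) (p : V) : Prop :=
  ∀ q ∈ E, ∀ α : ℝ, 0 ≤ α → α ≤ 1 →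
    f ((1 - α) • p + α • q) ≤ (1 - α) * f p + α * f q

/-- `f` (with directional-derivative function `f'` at `pbar`) is pseudo-convex at `pbar`. -/
def PseudoConvexAt {V : Type*} [NormedAddCommGroup V] [NormedSpace ℝ V]
    (E : Set V) (f : V → ℝ) (f' : V → ℝ) (pbar : V) : Prop :=
  ∀ p ∈ E, f p < f pbar → f' (p - pbar) < 0

/-- `f` (with directional-derivative function `f'` at `pbar`) is strictly
pseudo-convex at `pbar`. -/
def StrictPseudoConvexAt {V : Type*} [NormedAddCommGroup V] [NormedSpace ℝ V]
    (E : Set V) (f : V → ℝ) (f' : V → ℝ) (pbar : V) : Prop :=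
  ∀ p ∈ E, p ≠ pbar → f p ≤ f pbar → f' (p - pbar) < 0

/-- `[aL, aU] ≤_LU [bL, bU]`. -/
def LUle (aL aU bL bU : ℝ) : Prop := aL ≤ bL ∧ aU ≤ bU

/-- `[aL, aU] <_LU [bL, bU]`. -/
def LUlt (aL aU bL bU : ℝ) : Prop := LUle aL aU bL bU ∧ (aL ≠ bL ∨ aU ≠ bU)

/-- `[aL, aU] ≤_CW [bL, bU]`. -/
def CWle (aL aU bL bU : ℝ) : Prop :=
  (aL + aU) / 2 ≤ (bL + bU) / 2 ∧ (aU - aL) / 2 ≤ (bU - bL) / 2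

/-- `[aL, aU] <_CW [bL, bU]`. -/
def CWlt (aL aU bL bU : ℝ) : Prop := CWle aL aU bL bU ∧ (aL ≠ bL ∨ aU ≠ bU)

/-- Theorem 3.4(b), Euclidean case: KKT sufficiency for type-II
Pareto optimal solutions under CW-strict pseudo-convexity of the objectives and
strict pseudo-convexity of the active constraints. -/
theorem kkt_type_II_CW_strict_pseudoconvex
    {V : Type*} [NormedAddCommGroup V] [NormedSpace ℝ V]
    (E : Set V) (hEne : E.Nonempty) (hEopen : IsOpen E) (hEconv : Convex ℝ E)
    (l t : ℕ) (φL φU : Fin l → V → ℝ) (ψ : Fin t → V → ℝ)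
    (hφint : ∀ s, ∀ x ∈ E, φL s x ≤ φU s x)
    (pbar : V) (hpbarE : pbar ∈ E) (hpbarF : ∀ u, ψ u pbar ≤ 0)
    (φL' φU' : Fin l → V → ℝ)
    (hφLd : ∀ s w, HasDirDeriv (φL s) pbar w (φL' s w))
    (hφUd : ∀ s w, HasDirDeriv (φU s) pbar w (φU' s w))
    (ψ' : Fin t → V → ℝ)
    (hψd : ∀ u w, HasDirDeriv (ψ u) pbar w (ψ' u w))
    -- strict pseudo-convexity of the active constraints at `pbar`
    (hψspc : ∀ u, ψ u pbar = 0 → StrictPseudoConvexAt E (ψ u) (ψ' u) pbar)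
    -- CW-strict pseudo-convexity of the objectives at `pbar`
    (hφCspc : ∀ s, StrictPseudoConvexAt E (fun x => (φL s x + φU s x) / 2)
      (fun w => (φL' s w + φU' s w) / 2) pbar)
    (hφWspc : ∀ s, StrictPseudoConvexAt E (fun x => (φU s x - φL s x) / 2)
      (fun w => (φU' s w - φL' s w) / 2) pbar)
    -- multipliers, possibly depending on the feasible point `p`
    (hkkt : ∀ p, p ∈ E → (∀ u, ψ u p ≤ 0) →
      ∃ (lamC lamW : Fin l → ℝ) (μC μW : Fin t → ℝ),
        (∀ s, 0 < lamC s) ∧ (∀ s, 0 < lamW s) ∧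
        (∀ u, 0 ≤ μC u) ∧ (∀ u, 0 ≤ μW u) ∧
        0 ≤ ∑ s, lamC s * ((φL' s (p - pbar) + φU' s (p - pbar)) / 2)
            + ∑ u, μC u * ψ' u (p - pbar) ∧
        0 ≤ ∑ s, lamW s * ((φU' s (p - pbar) - φL' s (p - pbar)) / 2)
            + ∑ u, μW u * ψ' u (p - pbar) ∧
        (∀ u, μC u * ψ u pbar = 0 ∧ μW u * ψ u pbar = 0)) :
    ¬ ∃ phat, (phat ∈ E ∧ ∀ u, ψ u phat ≤ 0) ∧
      (∀ s, CWle (φL s phat) (φU s phat) (φL s pbar) (φU s pbar)) ∧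
      (∃ h, CWlt (φL h phat) (φU h phat) (φL h pbar) (φU h pbar)) := by
  rintro ⟨phat, ⟨hE, hF⟩, hle, h, hlt⟩
  have hne : phat ≠ pbar := by
    rintro rfl
    rcases hlt.2 with h' | h' <;> exact h' rfl
  obtain ⟨lamC, lamW, μC, μW, hlC, hlW, hmC, hmW, hiv, hv, hcomp⟩ := hkkt phat hE hF
  have hC : ∀ s, (φL' s (phat - pbar) + φU' s (phat - pbar)) / 2 < 0 := fun s =>
    hφCspc s phat hE hne (hle s).1
  haveI : Nonempty (Fin l) := ⟨h⟩
  have hsum1 : ∑ s, lamC s * ((φL' s (phat - pbar) + φU' s (phat - pbar)) / 2) < 0 := by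
    have := Finset.sum_lt_sum_of_nonempty (Finset.univ_nonempty)
      (f := fun s => lamC s * ((φL' s (phat - pbar) + φU' s (phat - pbar)) / 2))
      (g := fun _ : Fin l => (0:ℝ))
      (fun s _ => mul_neg_of_pos_of_neg (hlC s) (hC s))
    simpa using this
  have hsum2 : ∑ u, μC u * ψ' u (phat - pbar) ≤ 0 := by
    apply Finset.sum_nonpos
    intro u _
    rcases eq_or_lt_of_le (hmC u) with h0 | h0
    · simp [← h0]
    · have hact : ψ u pbar = 0 := by
        have := (hcomp u).1
        rcases mul_eq_zero.mp this with h' | h'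
        · exact absurd h' (ne_of_gt h0)
        · exact h'
      have hlt' : ψ' u (phat - pbar) < 0 :=
        hψspc u hact phat hE hne (by rw [hact]; exact hF u)
      exact le_of_lt (mul_neg_of_pos_of_neg h0 hlt')
  linarith
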